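/- Let F(t) = M + Ct for constants M, C ≥ 0, and suppose v : [0,T] × ℝ → ℝ is continuous, twice differentiable in x, once in t, satisfies ∂ₜv + f'(v)∂ₓv - ε∂²ₓₓv ≤ C on (0,T) × ℝ (with ε > 0, f ∈ C²), v is bounded, and v(0,x) ≤ M for all x. Then v(t,x) ≤ M + Ct for all (t,x) ∈ [0,T] × ℝ. -/

import Mathlib

open Set Filter Topology

lemma aux_sqrt_pos (x : ℝ) : 0 < Real.sqrt (1 + x^2) := Real.sqrt_pos.2 (by positivity)

lemma aux_sqrt_one_le (x : ℝ) : 1 ≤ Real.sqrt (1 + x^2) := by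
  rw [Real.one_le_sqrt]; nlinarith

lemma aux_sqrt_abs_le (x : ℝ) : |x| ≤ Real.sqrt (1 + x^2) := by
  rw [← Real.sqrt_sq_eq_abs]
  exact Real.sqrt_le_sqrt (by nlinarith)

lemma aux_hasDerivAt_r (x : ℝ) :
    HasDerivAt (fun y => Real.sqrt (1 + y^2)) (x / Real.sqrt (1 + x^2)) x := by
  have h1 : HasDerivAt (fun y : ℝ => 1 + y^2) (2*x) x := by
    simpa using ((hasDerivAt_pow 2 x).const_add 1)
  have h2 := (Real.hasDerivAt_sqrt (by positivity : (1:ℝ)+x^2 ≠ 0)).comp x h1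
  refine h2.congr_deriv ?_
  have := aux_sqrt_pos x
  field_simp

lemma aux_hasDerivAt_rx (x : ℝ) :
    HasDerivAt (fun y => y / Real.sqrt (1 + y^2)) (1 / (Real.sqrt (1 + x^2))^3) x := by
  have h := (hasDerivAt_id x).div (aux_hasDerivAt_r x) (ne_of_gt (aux_sqrt_pos x))
  refine h.congr_deriv ?_
  have hp := aux_sqrt_pos x
  have hs : Real.sqrt (1+x^2)^2 = 1 + x^2 := Real.sq_sqrt (by positivity)
  field_simp
  simp only [id_eq]
  nlinarith [hp, hs]

lemma aux_max_deriv2_nonpos {φ φ' : ℝ → ℝ} {a c : ℝ}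
    (hφ : ∀ y, HasDerivAt φ (φ' y) y) (hφ' : HasDerivAt φ' c a)
    (hmax : ∀ y, φ y ≤ φ a) : c ≤ 0 := by
  by_contra hpos
  push_neg at hpos
  have hlm : IsLocalMax φ a := Filter.Eventually.of_forall hmax
  have hz : φ' a = 0 := hlm.hasDerivAt_eq_zero (hφ a)
  have hslope : Tendsto (slope φ' a) (𝓝[>] a) (𝓝 c) :=
    ((hasDerivAt_iff_tendsto_slope.1 hφ').mono_left
      (nhdsWithin_mono _ fun y hy => ne_of_gt hy))
  have hev : ∀ᶠ y in 𝓝[>] a, 0 < slope φ' a y := hslope.eventually (eventually_gt_nhds hpos)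
  rw [eventually_nhdsWithin_iff, Metric.eventually_nhds_iff] at hev
  obtain ⟨δ, hδ, hev⟩ := hev
  have hab : a < a + δ/2 := by linarith
  have hcont : ContinuousOn φ (Icc a (a + δ/2)) :=
    fun y _ => ((hφ y).continuousAt).continuousWithinAt
  obtain ⟨c', hc', hcv⟩ := exists_hasDerivAt_eq_slope φ φ' hab hcont (fun y _ => hφ y)
  obtain ⟨hc1, hc2⟩ := hc'
  have h1 : 0 < slope φ' a c' := by
    refine hev ?_ hc1
    rw [Real.dist_eq, abs_lt]
    constructor <;> linarith
  have h2 : 0 < φ' c' := by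
    have he : slope φ' a c' = φ' c' / (c' - a) := by rw [slope_def_field, hz]; ring
    rw [he] at h1
    rcases div_pos_iff.1 h1 with ⟨h, _⟩ | ⟨_, h⟩
    · exact h
    · linarith
  have h3 : (φ (a + δ/2) - φ a) / (a + δ/2 - a) ≤ 0 := by
    apply div_nonpos_of_nonpos_of_nonneg <;> linarith [hmax (a + δ/2)]
  rw [hcv] at h2
  linarith

lemma aux_left_max_deriv_nonneg {ψ : ℝ → ℝ} {d a : ℝ} (ha : 0 < a)
    (hψ : HasDerivAt ψ d a) (hmax : ∀ s, 0 ≤ s → s ≤ a → ψ s ≤ ψ a) : 0 ≤ d := by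
  have hslope : Tendsto (slope ψ a) (𝓝[<] a) (𝓝 d) :=
    ((hasDerivAt_iff_tendsto_slope.1 hψ).mono_left
      (nhdsWithin_mono _ fun y hy => ne_of_lt hy))
  refine ge_of_tendsto hslope ?_
  have h0 : ∀ᶠ s in 𝓝[<] a, (0:ℝ) < s :=
    eventually_nhdsWithin_of_eventually_nhds (eventually_gt_nhds ha)
  filter_upwards [h0, self_mem_nhdsWithin] with s hs0 hsa
  have hsa' : s < a := hsa
  rw [slope_def_field]
  have h1 : ψ s - ψ a ≤ 0 := by linarith [hmax s hs0.le hsa'.le]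
  have h2 : s - a < 0 := by linarith
  have := div_nonneg (neg_nonneg.2 h1) (neg_nonneg.2 h2.le)
  calc (0:ℝ) ≤ -(ψ s - ψ a) / -(s - a) := this
    _ = (ψ s - ψ a) / (s - a) := neg_div_neg_eq _ _

set_option maxHeartbeats 1000000 in
/-- Parabolic comparison principle (Lemma 2.5): if `∂ₜv + f'(v)∂ₓv - ε ∂²ₓₓv ≤ C` on
`(0,T) × ℝ`, `v` is bounded and `v(0,·) ≤ M`, then `v(t,x) ≤ M + Ct` on `[0,T] × ℝ`. -/
theorem stmt9 (T ε C M : ℝ) (hT : 0 < T) (hε : 0 < ε) (hC : 0 ≤ C) (hM : 0 ≤ M)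
    (f : ℝ → ℝ) (hf : ContDiff ℝ 2 f)
    (v vt vx vxx : ℝ → ℝ → ℝ)
    (hcont : Continuous fun p : ℝ × ℝ => v p.1 p.2)
    (hvt : ∀ t x, HasDerivAt (fun s => v s x) (vt t x) t)
    (hvx : ∀ t x, HasDerivAt (fun y => v t y) (vx t x) x)
    (hvxx : ∀ t x, HasDerivAt (fun y => vx t y) (vxx t x) x)
    (hbdd : ∃ B : ℝ, ∀ t x, |v t x| ≤ B)
    (hineq : ∀ t x, 0 < t → t < T → vt t x + deriv f (v t x) * vx t x - ε * vxx t x ≤ C)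
    (hinit : ∀ x, v 0 x ≤ M) :
    ∀ t x, t ∈ Icc 0 T → v t x ≤ M + C * t := by
  obtain ⟨B, hB⟩ := hbdd
  have hB0 : 0 ≤ B := (abs_nonneg _).trans (hB 0 0)
  obtain ⟨K0, hK0⟩ := (isCompact_Icc (a := -B) (b := B)).exists_bound_of_continuousOn
    ((hf.continuous_deriv one_le_two).continuousOn)
  set K := max K0 0 with hK
  have hKnn : 0 ≤ K := le_max_right _ _
  have hKb : ∀ y : ℝ, |y| ≤ B → |deriv f y| ≤ K := by
    intro y hy
    have := hK0 y (abs_le.1 hy)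
    rw [Real.norm_eq_abs] at this
    exact this.trans (le_max_left _ _)
  set L := K + ε + 1 with hL
  have hL0 : 0 < L := by linarith
  -- key estimate for t' < T
  have key : ∀ η, 0 < η → ∀ t' x', 0 ≤ t' → t' < T →
      v t' x' ≤ M + C * t' + η * Real.exp (L * t') * Real.sqrt (1 + x'^2) := by
    intro η hη t' x' ht'0 ht'T
    set w : ℝ → ℝ → ℝ :=
      fun s y => v s y - M - C * s - η * Real.exp (L * s) * Real.sqrt (1 + y^2) with hwdef
    have hE1 : ∀ s : ℝ, 0 ≤ s → 1 ≤ Real.exp (L * s) := fun s hs =>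
      Real.one_le_exp (mul_nonneg hL0.le hs)
    set R := (2*B + M + η)/η + 1 with hR
    have hR0 : 0 ≤ R := by positivity
    have hηR : 2*B + M + η ≤ η * R := by
      rw [hR]
      have : η * ((2*B + M + η)/η + 1) = (2*B + M + η) + η := by
        field_simp
      rw [this]; linarith
    have hout : ∀ s y, 0 ≤ s → R ≤ |y| → w s y ≤ w 0 0 := by
      intro s y hs hy
      have h1 : v s y ≤ B := (abs_le.1 (hB s y)).2
      have h2 : -B ≤ v 0 0 := (abs_le.1 (hB 0 0)).1
      have h3 : |y| ≤ Real.sqrt (1 + y^2) := aux_sqrt_abs_le y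
      have h4 : 1 ≤ Real.exp (L*s) := hE1 s hs
      have ha : R ≤ Real.sqrt (1 + y^2) := le_trans hy h3
      have hb : η * R ≤ η * Real.sqrt (1 + y^2) := mul_le_mul_of_nonneg_left ha hη.le
      have h6 : η * R ≤ η * Real.exp (L*s) * Real.sqrt (1 + y^2) := by
        nlinarith [mul_nonneg (mul_nonneg hη.le (Real.sqrt_nonneg (1 + y^2)))
          (sub_nonneg.2 h4)]
      simp only [hwdef, mul_zero, Real.exp_zero]
      have h5 : Real.sqrt (1 + (0:ℝ)^2) = 1 := by norm_num
      rw [h5]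
      nlinarith [mul_nonneg hC hs]
    have hwc : Continuous fun p : ℝ × ℝ => w p.1 p.2 := by
      simp only [hwdef]
      apply Continuous.sub
      apply Continuous.sub
      apply Continuous.sub hcont continuous_const
      · exact continuous_const.mul continuous_fst
      · fun_prop
    have hA : IsCompact (Icc (0:ℝ) t' ×ˢ Icc (-R) R) := isCompact_Icc.prod isCompact_Icc
    have hAne : ((0:ℝ),(0:ℝ)) ∈ Icc (0:ℝ) t' ×ˢ Icc (-R) R := by
      refine ⟨⟨le_rfl, ht'0⟩, ⟨?_, ?_⟩⟩
      · show -R ≤ (0:ℝ)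
        linarith
      · show (0:ℝ) ≤ R
        exact hR0
    obtain ⟨p₀, hp₀A, hp₀max⟩ := hA.exists_isMaxOn ⟨_, hAne⟩ hwc.continuousOn
    obtain ⟨t₀, x₀⟩ := p₀
    have ht₀0 : 0 ≤ t₀ := hp₀A.1.1
    have ht₀t' : t₀ ≤ t' := hp₀A.1.2
    have hglob : ∀ s y, 0 ≤ s → s ≤ t' → w s y ≤ w t₀ x₀ := by
      intro s y hs hst
      by_cases hy : |y| ≤ R
      · have hm : ((s,y) : ℝ × ℝ) ∈ Icc (0:ℝ) t' ×ˢ Icc (-R) R :=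
          ⟨⟨hs, hst⟩, abs_le.1 hy⟩
        exact hp₀max hm
      · exact le_trans (hout s y hs (not_le.1 hy).le) (hp₀max hAne)
    have hfinal : w t₀ x₀ ≤ 0 := by
      rcases eq_or_lt_of_le ht₀0 with h0 | h0
      · -- t₀ = 0
        have hi := hinit x₀
        have h1 : 1 ≤ Real.sqrt (1 + x₀^2) := aux_sqrt_one_le x₀
        simp only [hwdef, ← h0, mul_zero, Real.exp_zero]
        nlinarith [hi, h1, hη, mul_pos hη (aux_sqrt_pos x₀)]
      · exfalso
        have hE : (1:ℝ) ≤ Real.exp (L*t₀) := hE1 t₀ ht₀0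
        have hEpos : (0:ℝ) < Real.exp (L*t₀) := Real.exp_pos _
        set E := Real.exp (L * t₀) with hEdef
        -- x-direction derivatives of y ↦ w t₀ y
        have hwx : ∀ y, HasDerivAt (fun y => w t₀ y)
            (vx t₀ y - η * E * (y / Real.sqrt (1 + y^2))) y := by
          intro y
          simp only [hwdef]
          exact (((hvx t₀ y).sub_const M).sub_const (C*t₀)).sub
            ((aux_hasDerivAt_r y).const_mul (η * E))
        have hwxx : HasDerivAt (fun y => vx t₀ y - η * E * (y / Real.sqrt (1 + y^2)))
            (vxx t₀ x₀ - η * E * (1 / (Real.sqrt (1 + x₀^2))^3)) x₀ :=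
          (hvxx t₀ x₀).sub ((aux_hasDerivAt_rx x₀).const_mul (η * E))
        have hmaxx : ∀ y, w t₀ y ≤ w t₀ x₀ := fun y => hglob t₀ y ht₀0 ht₀t'
        have hlm : IsLocalMax (fun y => w t₀ y) x₀ := Filter.Eventually.of_forall hmaxx
        have hvx0 : vx t₀ x₀ - η * E * (x₀ / Real.sqrt (1 + x₀^2)) = 0 :=
          hlm.hasDerivAt_eq_zero (hwx x₀)
        have hvxx0 : vxx t₀ x₀ - η * E * (1 / (Real.sqrt (1 + x₀^2))^3) ≤ 0 :=
          aux_max_deriv2_nonpos hwx hwxx hmaxx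
        -- t-direction
        have hwt : HasDerivAt (fun s => w s x₀)
            (vt t₀ x₀ - C - η * (L * E) * Real.sqrt (1 + x₀^2)) t₀ := by
          simp only [hwdef]
          have hexp : HasDerivAt (fun s => Real.exp (L*s)) (L * E) t₀ := by
            have hin : HasDerivAt (fun s : ℝ => L * s) L t₀ := by
              simpa using (hasDerivAt_id t₀).const_mul L
            have h := (Real.hasDerivAt_exp (L*t₀)).comp t₀ hin
            have h2 : HasDerivAt (fun s => Real.exp (L*s)) (Real.exp (L*t₀) * L) t₀ := h
            rw [show L * E = Real.exp (L*t₀) * L by rw [hEdef]; ring]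
            exact h2
          have hlin : HasDerivAt (fun s : ℝ => C * s) C t₀ := by
            simpa using (hasDerivAt_id t₀).const_mul C
          have hbar : HasDerivAt (fun s => η * Real.exp (L*s) * Real.sqrt (1 + x₀^2))
              (η * (L * E) * Real.sqrt (1 + x₀^2)) t₀ :=
            (hexp.const_mul η).mul_const _
          exact (((hvt t₀ x₀).sub_const M).sub hlin).sub hbar
        have hvt0 : 0 ≤ vt t₀ x₀ - C - η * (L * E) * Real.sqrt (1 + x₀^2) :=
          aux_left_max_deriv_nonneg h0 hwt
            (fun s hs0 hst₀ => hglob s x₀ hs0 (hst₀.trans ht₀t'))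
        -- PDE inequality at (t₀, x₀)
        have hpde := hineq t₀ x₀ h0 (lt_of_le_of_lt ht₀t' ht'T)
        have hr1 : 1 ≤ Real.sqrt (1 + x₀^2) := aux_sqrt_one_le x₀
        have hrpos : 0 < Real.sqrt (1 + x₀^2) := aux_sqrt_pos x₀
        have habs : |x₀ / Real.sqrt (1 + x₀^2)| ≤ 1 := by
          rw [abs_div, abs_of_pos hrpos, div_le_one hrpos]
          exact aux_sqrt_abs_le x₀
        have hfK : |deriv f (v t₀ x₀)| ≤ K := hKb _ (hB t₀ x₀)
        -- bound the transport term
        have hterm1 : -(K * (η * E)) ≤ deriv f (v t₀ x₀) * vx t₀ x₀ := by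
          have hvxeq : vx t₀ x₀ = η * E * (x₀ / Real.sqrt (1 + x₀^2)) := by linarith
          have hsub : η * E * |x₀ / Real.sqrt (1 + x₀^2)| ≤ η * E := by
            have := mul_le_mul_of_nonneg_left habs (mul_pos hη hEpos).le
            simpa using this
          have h1 : |deriv f (v t₀ x₀) * vx t₀ x₀| ≤ K * (η * E) := by
            rw [abs_mul, hvxeq, abs_mul, abs_mul, abs_of_pos hη, abs_of_pos hEpos]
            exact mul_le_mul hfK hsub (by positivity) hKnn
          linarith [neg_abs_le (deriv f (v t₀ x₀) * vx t₀ x₀)]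
        -- bound the diffusion term
        have hterm2 : ε * vxx t₀ x₀ ≤ ε * (η * E) := by
          have h1 : 1 / (Real.sqrt (1 + x₀^2))^3 ≤ 1 := by
            rw [div_le_one (by positivity)]
            calc (1:ℝ) = 1^3 := by norm_num
              _ ≤ (Real.sqrt (1 + x₀^2))^3 := by
                  apply pow_le_pow_left₀ (by norm_num) hr1
          have h2 : vxx t₀ x₀ ≤ η * E := by
            have h3 : η * E * (1 / (Real.sqrt (1 + x₀^2))^3) ≤ η * E * 1 :=
              mul_le_mul_of_nonneg_left h1 (mul_pos hη hEpos).le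
            rw [mul_one] at h3
            linarith
          exact mul_le_mul_of_nonneg_left h2 hε.le
        have hLr : 1 ≤ L * Real.sqrt (1 + x₀^2) - K - ε := by
          have := mul_le_mul_of_nonneg_left hr1 hL0.le
          rw [mul_one] at this
          linarith [hL]
        have hηE : 0 < η * E := mul_pos hη hEpos
        have hkey : η ≤ η * (L * E) * Real.sqrt (1 + x₀^2) - K * (η * E) - ε * (η * E) := by
          have h1 : η * E * 1 ≤ η * E * (L * Real.sqrt (1 + x₀^2) - K - ε) :=
            mul_le_mul_of_nonneg_left hLr hηE.le
          have h2 : η * 1 ≤ η * E := mul_le_mul_of_nonneg_left hE hη.le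
          nlinarith [h1, h2]
        linarith
    have := hglob t' x' ht'0 le_rfl
    simp only [hwdef] at this hfinal
    linarith
  -- conclude
  intro t x ht
  obtain ⟨ht0, htT⟩ := ht
  refine le_of_forall_pos_le_add ?_
  intro δ hδ
  set D := Real.exp (L * t) * Real.sqrt (1 + x^2) with hD
  have hDpos : 0 < D := mul_pos (Real.exp_pos _) (aux_sqrt_pos x)
  rcases lt_or_eq_of_le htT with hlt | heq
  · have hk := key (δ / D) (div_pos hδ hDpos) t x ht0 hlt
    have hmul : δ / D * Real.exp (L * t) * Real.sqrt (1 + x^2) = δ := by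
      rw [mul_assoc, ← hD]
      exact div_mul_cancel₀ δ hDpos.ne'
    rw [hmul] at hk
    linarith
  · -- t = T : pass to the limit from the left
    subst heq
    have hcl : Tendsto (fun s => v s x) (𝓝[<] t) (𝓝 (v t x)) :=
      ((hvt t x).continuousAt).continuousWithinAt
    have hcr : Tendsto (fun s => M + C * s + (δ / D) * Real.exp (L * s) * Real.sqrt (1 + x^2))
        (𝓝[<] t) (𝓝 (M + C * t + (δ / D) * Real.exp (L * t) * Real.sqrt (1 + x^2))) := by
      apply Filter.Tendsto.mono_left _ nhdsWithin_le_nhds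
      have hcts : Continuous
          (fun s => M + C * s + (δ / D) * Real.exp (L * s) * Real.sqrt (1 + x^2)) := by
        fun_prop
      exact hcts.tendsto t
    have hev : ∀ᶠ s in 𝓝[<] t,
        v s x ≤ M + C * s + (δ / D) * Real.exp (L * s) * Real.sqrt (1 + x^2) := by
      have h0 : ∀ᶠ s in 𝓝[<] t, (0:ℝ) < s :=
        eventually_nhdsWithin_of_eventually_nhds (eventually_gt_nhds hT)
      filter_upwards [h0, self_mem_nhdsWithin] with s hs0 hst
      exact key (δ / D) (div_pos hδ hDpos) s x hs0.le hst
    have hle := le_of_tendsto_of_tendsto hcl hcr hev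
    have hmul : δ / D * Real.exp (L * t) * Real.sqrt (1 + x^2) = δ := by
      rw [mul_assoc, ← hD]
      exact div_mul_cancel₀ δ hDpos.ne'
    rw [hmul] at hle
    linarith
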